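/- Let (Φ_t)_{t≥0} be a continuous one-parameter semigroup on the right half-plane Π with Denjoy–Wolff point at ∞, generated by −φ, where φ has no zeros in Π and admits the representation φ(w) = β + ϱ(w) with β ∈ ℂ and ϱ(w) → 0 as |w| → ∞, w ∈ Π. Let σ be the holomorphic function with σ'(w) = 1/φ(w), σ(1) = 0. Then for every w ∈ Π, lim_{t→∞} ( Φ_t(w) − Φ_t(1) ) = β·σ(w). -/

import Mathlib

open Complex Filter Topology Set MeasureTheory

noncomputable section

/-- The right half-plane in the complex plane. -/
def rightHalfPlane : Set ℂ := {w : ℂ | 0 < w.re}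

/-- A continuous one-parameter semigroup `Φ` on the right half-plane generated by `-φ`,
where `Re φ ≥ 0`: each `Φ t` is a holomorphic self-map of the half-plane, `Φ 0 = id`,
`Φ (t+s) = Φ t ∘ Φ s`, and for each `w` the trajectory `t ↦ Φ t w` solves
`∂Φ_t(w)/∂t = φ(Φ_t(w))`. -/
structure IsContinuousSemigroupOnHalfPlane (Φ : ℝ → ℂ → ℂ) (φ : ℂ → ℂ) : Prop where
  mapsTo : ∀ t : ℝ, 0 ≤ t → Set.MapsTo (Φ t) rightHalfPlane rightHalfPlane
  holomorphic : ∀ t : ℝ, 0 ≤ t → DifferentiableOn ℂ (Φ t) rightHalfPlane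
  init : ∀ w ∈ rightHalfPlane, Φ 0 w = w
  semigroup : ∀ t s : ℝ, 0 ≤ t → 0 ≤ s → ∀ w ∈ rightHalfPlane, Φ (t + s) w = Φ t (Φ s w)
  gen_holomorphic : DifferentiableOn ℂ φ rightHalfPlane
  gen_re_nonneg : ∀ w ∈ rightHalfPlane, 0 ≤ (φ w).re
  ode : ∀ w ∈ rightHalfPlane, ∀ t : ℝ, 0 ≤ t →
    HasDerivWithinAt (fun s : ℝ => Φ s w) (φ (Φ t w)) (Set.Ici (0 : ℝ)) t

/-- The semigroup has Denjoy–Wolff point at `∞`. -/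
def HasDWPointInfty (Φ : ℝ → ℂ → ℂ) : Prop :=
  ∀ w ∈ rightHalfPlane, Tendsto (fun t : ℝ => ‖Φ t w‖) atTop atTop

/-- The filter of neighbourhoods of `∞` within a set `S ⊆ ℂ`:
`|w| → ∞` with `w ∈ S`. -/
def atInftyWithin (S : Set ℂ) : Filter ℂ :=
  Filter.comap (fun w : ℂ => ‖w‖) Filter.atTop ⊓ Filter.principal S

/-- `σ` solves `σ' = 1/φ` on the right half-plane with `σ 1 = 0`. -/
def IsSigmaFunction (φ σ : ℂ → ℂ) : Prop :=
  (∀ w ∈ rightHalfPlane, HasDerivAt σ (1 / φ w) w) ∧ σ 1 = 0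

namespace SPAux

lemma normSq_mob_identity (c z : ℂ) :
    normSq (1 - (starRingEnd ℂ) c * z) - normSq (z - c) = (1 - normSq c) * (1 - normSq z) := by
  simp only [normSq_apply, mul_re, mul_im, sub_re, sub_im, one_re, one_im,
    Complex.conj_re, Complex.conj_im]
  ring

/-- Möbius map of the disc. -/
def mob (c z : ℂ) : ℂ := (z - c) / (1 - (starRingEnd ℂ) c * z)

lemma mob_denom_ne {c z : ℂ} (hc : c ∈ Metric.ball (0:ℂ) 1) (hz : z ∈ Metric.ball (0:ℂ) 1) :
    1 - (starRingEnd ℂ) c * z ≠ 0 := by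
  simp only [Metric.mem_ball, dist_zero_right] at hc hz
  intro h
  have h1 : (starRingEnd ℂ) c * z = 1 := by linear_combination -h
  have := congrArg (fun x : ℂ => ‖x‖) h1
  simp only [norm_mul, Complex.norm_conj, norm_one] at this
  nlinarith [norm_nonneg c, norm_nonneg z]

lemma mob_mapsTo {c : ℂ} (hc : c ∈ Metric.ball (0:ℂ) 1) :
    MapsTo (mob c) (Metric.ball (0:ℂ) 1) (Metric.ball (0:ℂ) 1) := by
  intro z hz
  have hd := mob_denom_ne hc hz
  simp only [Metric.mem_ball, dist_zero_right] at hc hz ⊢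
  rw [mob, norm_div, div_lt_one (norm_pos_iff.mpr hd)]
  have key := normSq_mob_identity c z
  have h1 : normSq c < 1 := by rw [← Complex.sq_norm]; nlinarith [norm_nonneg c]
  have h2 : normSq z < 1 := by rw [← Complex.sq_norm]; nlinarith [norm_nonneg z]
  have : normSq (z - c) < normSq (1 - (starRingEnd ℂ) c * z) := by nlinarith
  have := Real.sqrt_lt_sqrt (normSq_nonneg _) this
  rwa [← Complex.norm_def, ← Complex.norm_def] at this

lemma mob_inv {c z : ℂ} (hc : c ∈ Metric.ball (0:ℂ) 1) (hz : z ∈ Metric.ball (0:ℂ) 1) :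
    mob (-c) (mob c z) = z := by
  have hd := mob_denom_ne hc hz
  have hd2 : 1 - (starRingEnd ℂ) (-c) * mob c z ≠ 0 := mob_denom_ne (by simpa using hc) (mob_mapsTo hc hz)
  rw [mob, div_eq_iff hd2]
  simp only [mob, map_neg, neg_mul, sub_neg_eq_add] at *
  have hd' : 1 - z * (starRingEnd ℂ) c ≠ 0 := by rwa [mul_comm]
  field_simp
  ring

end SPAux

namespace SPAux2
open SPAux

lemma mob_diff {c : ℂ} (hc : c ∈ Metric.ball (0:ℂ) 1) :
    DifferentiableOn ℂ (mob c) (Metric.ball (0:ℂ) 1) := by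
  apply DifferentiableOn.div
  · exact (differentiable_id.sub_const c).differentiableOn
  · exact ((differentiable_const _).sub ((differentiable_const _).mul differentiable_id)).differentiableOn
  · exact fun z hz => mob_denom_ne hc hz

/-- Schwarz–Pick on the unit disc. -/
lemma sp_disc {g : ℂ → ℂ} (hd : DifferentiableOn ℂ g (Metric.ball (0:ℂ) 1))
    (hm : MapsTo g (Metric.ball (0:ℂ) 1) (Metric.ball (0:ℂ) 1))
    {u v : ℂ} (hu : u ∈ Metric.ball (0:ℂ) 1) (hv : v ∈ Metric.ball (0:ℂ) 1) :
    ‖mob (g v) (g u)‖ ≤ ‖mob v u‖ := by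
  have hgv : g v ∈ Metric.ball (0:ℂ) 1 := hm hv
  have hnv : -v ∈ Metric.ball (0:ℂ) 1 := by simpa using hv
  set h : ℂ → ℂ := fun z => mob (g v) (g (mob (-v) z)) with hh
  have hmv : MapsTo (mob (-v)) (Metric.ball (0:ℂ) 1) (Metric.ball (0:ℂ) 1) := mob_mapsTo hnv
  have hdh : DifferentiableOn ℂ h (Metric.ball (0:ℂ) 1) :=
    ((mob_diff hgv).comp (hd.comp (mob_diff hnv) hmv) (hm.comp hmv))
  have hmh : MapsTo h (Metric.ball (0:ℂ) 1) (Metric.ball (0:ℂ) 1) :=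
    (mob_mapsTo hgv).comp (hm.comp hmv)
  have h0 : h 0 = 0 := by
    have : mob (-v) 0 = v := by
      simp [mob]
    rw [hh]; simp only [this]
    simp [mob, sub_self]
  have key := Complex.dist_le_div_mul_dist_of_mapsTo_ball hdh
      (by rw [h0]; exact hmh.mono_right Metric.ball_subset_closedBall) (z := mob v u) ((mob_mapsTo hv) hu)
  rw [h0, dist_zero_right, dist_zero_right, div_self (one_ne_zero), one_mul] at key
  have : h (mob v u) = mob (g v) (g u) := by
    simp only [hh, mob_inv hv hu]
  rw [this] at key
  simpa using key

end SPAux2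

namespace SPHalf
open SPAux SPAux2

def cayley (z : ℂ) : ℂ := (z - 1) / (z + 1)
def icayley (u : ℂ) : ℂ := (1 + u) / (1 - u)

lemma add_one_ne {z : ℂ} (hz : z ∈ rightHalfPlane) : z + 1 ≠ 0 := by
  intro h
  have : (z + 1).re = 0 := by rw [h]; simp
  simp only [Complex.add_re, Complex.one_re] at this
  have : (0:ℝ) < z.re := hz
  linarith

lemma add_conj_ne {z ζ : ℂ} (hz : z ∈ rightHalfPlane) (hζ : ζ ∈ rightHalfPlane) :
    z + (starRingEnd ℂ) ζ ≠ 0 := by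
  intro h
  have : (z + (starRingEnd ℂ) ζ).re = 0 := by rw [h]; simp
  simp only [Complex.add_re, Complex.conj_re] at this
  have h1 : (0:ℝ) < z.re := hz
  have h2 : (0:ℝ) < ζ.re := hζ
  linarith

lemma cayley_mem {z : ℂ} (hz : z ∈ rightHalfPlane) : cayley z ∈ Metric.ball (0:ℂ) 1 := by
  have h1 : (0:ℝ) < z.re := hz
  simp only [Metric.mem_ball, dist_zero_right, cayley, norm_div]
  rw [div_lt_one (norm_pos_iff.mpr (add_one_ne hz))]
  have : normSq (z - 1) < normSq (z + 1) := by
    simp only [normSq_apply, sub_re, sub_im, add_re, add_im, Complex.one_re, Complex.one_im]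
    nlinarith
  have := Real.sqrt_lt_sqrt (normSq_nonneg _) this
  rwa [← Complex.norm_def, ← Complex.norm_def] at this

lemma one_sub_ne {u : ℂ} (hu : u ∈ Metric.ball (0:ℂ) 1) : 1 - u ≠ 0 := by
  intro h
  have : u = 1 := by linear_combination -h
  simp only [Metric.mem_ball, dist_zero_right, this] at hu
  norm_num at hu

lemma icayley_mem {u : ℂ} (hu : u ∈ Metric.ball (0:ℂ) 1) : icayley u ∈ rightHalfPlane := by
  have hne := one_sub_ne hu
  have habs : ‖u‖ < 1 := by simpa [Metric.mem_ball, dist_zero_right] using hu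
  have hsq : normSq u < 1 := by rw [← Complex.sq_norm]; nlinarith [norm_nonneg u]
  show (0:ℝ) < (icayley u).re
  rw [icayley, Complex.div_re]
  have hpos : 0 < normSq (1 - u) := normSq_pos.2 hne
  have : (1 + u).re * (1 - u).re + (1 + u).im * (1 - u).im = 1 - normSq u := by
    simp only [normSq_apply, add_re, add_im, sub_re, sub_im, Complex.one_re, Complex.one_im]
    ring
  rw [← add_div, this]
  exact div_pos (by linarith) hpos

lemma icayley_cayley {z : ℂ} (hz : z ∈ rightHalfPlane) : icayley (cayley z) = z := by
  have h1 := add_one_ne hz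
  have h2 := one_sub_ne (cayley_mem hz)
  rw [icayley, div_eq_iff h2, cayley] at *
  field_simp
  ring

lemma cayley_diff : DifferentiableOn ℂ cayley rightHalfPlane :=
  DifferentiableOn.div (differentiable_id.sub_const 1).differentiableOn
    (differentiable_id.add_const 1).differentiableOn (fun z hz => add_one_ne hz)

lemma icayley_diff : DifferentiableOn ℂ icayley (Metric.ball (0:ℂ) 1) :=
  DifferentiableOn.div ((differentiable_const _).add differentiable_id).differentiableOn
    ((differentiable_const _).sub differentiable_id).differentiableOn (fun u hu => one_sub_ne hu)

lemma mob_cayley {α β : ℂ} (hα : α ∈ rightHalfPlane) (hβ : β ∈ rightHalfPlane) :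
    ‖mob (cayley β) (cayley α)‖
      = ‖α - β‖ / ‖α + (starRingEnd ℂ) β‖ := by
  have hα1 := add_one_ne hα
  have hβ1 := add_one_ne hβ
  have hαβ := add_conj_ne hα hβ
  have hd := mob_denom_ne (cayley_mem hβ) (cayley_mem hα)
  have hβ1c : (starRingEnd ℂ) β + 1 ≠ 0 := by
    intro h
    apply hβ1
    have := congrArg (starRingEnd ℂ) h
    simpa [add_comm] using this
  have e1 : cayley α - cayley β = 2 * (α - β) / ((α + 1) * (β + 1)) := by
    rw [cayley, cayley]; field_simp; ring
  have e2 : 1 - (starRingEnd ℂ) (cayley β) * cayley α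
      = 2 * (α + (starRingEnd ℂ) β) / ((α + 1) * ((starRingEnd ℂ) β + 1)) := by
    rw [cayley, cayley]
    rw [map_div₀, map_sub, map_add, map_one]
    field_simp
    ring
  rw [mob, e1, e2, norm_div, norm_div, norm_div]
  have hab : ‖(starRingEnd ℂ) β + 1‖ = ‖β + 1‖ := by
    have h : (starRingEnd ℂ) β + 1 = (starRingEnd ℂ) (β + 1) := by simp
    rw [h, Complex.norm_conj]
  simp only [norm_mul, hab, Complex.norm_two]
  have p1 : 0 < ‖α+1‖ := norm_pos_iff.mpr hα1
  have p2 : 0 < ‖β+1‖ := norm_pos_iff.mpr hβ1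
  have p3 : 0 < ‖α + (starRingEnd ℂ) β‖ := norm_pos_iff.mpr hαβ
  field_simp

end SPHalf

namespace SPMain
open SPAux SPAux2 SPHalf

lemma abs_add_conj_pos {z ζ : ℂ} (hz : z ∈ rightHalfPlane) (hζ : ζ ∈ rightHalfPlane) :
    0 < ‖z + (starRingEnd ℂ) ζ‖ := norm_pos_iff.mpr (add_conj_ne hz hζ)

/-- Schwarz–Pick for holomorphic self-maps of the right half-plane. -/
theorem sp_halfplane {f : ℂ → ℂ} (hd : DifferentiableOn ℂ f rightHalfPlane)
    (hm : MapsTo f rightHalfPlane rightHalfPlane)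
    {z ζ : ℂ} (hz : z ∈ rightHalfPlane) (hζ : ζ ∈ rightHalfPlane) :
    ‖f z - f ζ‖ * ‖z + (starRingEnd ℂ) ζ‖
      ≤ ‖f z + (starRingEnd ℂ) (f ζ)‖ * ‖z - ζ‖ := by
  set g : ℂ → ℂ := fun u => cayley (f (icayley u)) with hg
  have hmg : MapsTo g (Metric.ball (0:ℂ) 1) (Metric.ball (0:ℂ) 1) := by
    intro u hu
    exact cayley_mem (hm (icayley_mem hu))
  have hdg : DifferentiableOn ℂ g (Metric.ball (0:ℂ) 1) :=
    (cayley_diff.comp (hd.comp icayley_diff (fun u hu => icayley_mem hu))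
      (fun u hu => hm (icayley_mem hu)))
  have key := sp_disc hdg hmg (cayley_mem hz) (cayley_mem hζ)
  have e1 : g (cayley z) = cayley (f z) := by rw [hg]; simp only [icayley_cayley hz]
  have e2 : g (cayley ζ) = cayley (f ζ) := by rw [hg]; simp only [icayley_cayley hζ]
  rw [e1, e2, mob_cayley (hm hz) (hm hζ), mob_cayley hz hζ] at key
  rw [div_le_div_iff₀ (abs_add_conj_pos (hm hz) (hm hζ)) (abs_add_conj_pos hz hζ)] at key
  linarith

/-- Harnack-type estimates. -/
lemma harnack {u v : ℂ} {q : ℝ} (hv : 0 < v.re) (hq0 : 0 ≤ q) (hq : q < 1)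
    (h : ‖u - v‖ ≤ q * ‖u + (starRingEnd ℂ) v‖) :
    ‖u - v‖ ≤ 2 * q / (1 - q) * v.re ∧ (1 - q) / (1 + q) * v.re ≤ u.re := by
  constructor
  · have h1 : ‖u + (starRingEnd ℂ) v‖ ≤ ‖u - v‖ + 2 * v.re := by
      have : u + (starRingEnd ℂ) v = (u - v) + (v + (starRingEnd ℂ) v) := by ring
      rw [this]
      refine (norm_add_le _ _).trans ?_
      have : v + (starRingEnd ℂ) v = ((2 * v.re : ℝ) : ℂ) := by
        rw [Complex.add_conj]
        try norm_cast
      rw [this, Complex.norm_real, Real.norm_eq_abs, abs_of_pos (by linarith)]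
    have h2 : ‖u - v‖ ≤ q * ‖u - v‖ + 2 * q * v.re := by
      calc ‖u - v‖ ≤ q * (‖u - v‖ + 2 * v.re) :=
            h.trans (by apply mul_le_mul_of_nonneg_left h1 hq0)
        _ = q * ‖u - v‖ + 2 * q * v.re := by ring
    rw [div_mul_eq_mul_div, le_div_iff₀ (by linarith)]
    nlinarith [norm_nonneg (u - v)]
  · have hsq : (‖u - v‖)^2 ≤ q^2 * (‖u + (starRingEnd ℂ) v‖)^2 := by
      nlinarith [norm_nonneg (u - v), norm_nonneg (u + (starRingEnd ℂ) v)]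
    rw [Complex.sq_norm, Complex.sq_norm] at hsq
    simp only [normSq_apply, sub_re, sub_im, add_re, add_im, Complex.conj_re, Complex.conj_im] at hsq
    rw [div_mul_eq_mul_div, div_le_iff₀ (by linarith)]
    by_contra hcon
    push_neg at hcon
    have hq2 : q^2 ≤ 1 := by nlinarith
    have key : (u.re - v.re)^2 ≤ q^2 * (u.re + v.re)^2 := by
      nlinarith [sq_nonneg (u.im + -v.im), hq2, mul_nonneg (by linarith : (0:ℝ) ≤ 1 - q^2) (sq_nonneg (u.im + -v.im))]
    have factd : ((1-q)*v.re - (1+q)*u.re) * ((1+q)*v.re - (1-q)*u.re) ≤ 0 := by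
      nlinarith [key]
    have ha : 0 < (1-q)*v.re - (1+q)*u.re := by linarith
    have hb : (1+q)*v.re - (1-q)*u.re ≤ 0 := by
      by_contra hb
      push_neg at hb
      nlinarith [mul_pos ha hb]
    have hA : 0 < u.re := by nlinarith
    nlinarith [mul_nonneg hq0 (by linarith : (0:ℝ) ≤ u.re + v.re)]

end SPMain

namespace Work

lemma sigma_comp_deriv {φ σ : ℂ → ℂ} (hσ : ∀ w ∈ rightHalfPlane, HasDerivAt σ (1 / φ w) w)
    {g : ℝ → ℂ} {g' : ℂ} {s : Set ℝ} {x : ℝ} (hg : HasDerivWithinAt g g' s x)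
    (hmem : g x ∈ rightHalfPlane) :
    HasDerivWithinAt (fun u => σ (g u)) (g' * (1 / φ (g x))) s x := by
  have h2 : HasDerivAt σ (1 / φ (g x)) (g x) := hσ _ hmem
  have h3 := (h2.hasFDerivAt.restrictScalars ℝ).comp_hasDerivWithinAt x hg
  simp only [smul_eq_mul, ContinuousLinearMap.coe_restrictScalars'] at h3
  exact h3

lemma sigma_orbit {Φ : ℝ → ℂ → ℂ} {φ σ : ℂ → ℂ}
    (hsg : IsContinuousSemigroupOnHalfPlane Φ φ)
    (hnz : ∀ w ∈ rightHalfPlane, φ w ≠ 0)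
    (hσ : IsSigmaFunction φ σ)
    {z : ℂ} (hz : z ∈ rightHalfPlane) {t : ℝ} (ht : 0 ≤ t) :
    σ (Φ t z) = σ z + t := by
  have hmem : ∀ s : ℝ, 0 ≤ s → Φ s z ∈ rightHalfPlane := fun s hs => hsg.mapsTo s hs hz
  set f : ℝ → ℂ := fun s => σ (Φ s z) - s with hf
  have hder : ∀ x ∈ Ico 0 t, HasDerivWithinAt f 0 (Ici x) x := by
    intro x hx
    have h1 : HasDerivWithinAt (fun s => Φ s z) (φ (Φ x z)) (Ici x) x :=
      (hsg.ode z hz x hx.1).mono (Ici_subset_Ici.2 hx.1)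
    have h4 := sigma_comp_deriv hσ.1 h1 (hmem x hx.1)
    have h5 : HasDerivWithinAt (fun s : ℝ => (s : ℂ)) 1 (Ici x) x := by
      exact Complex.ofRealCLM.hasDerivAt.hasDerivWithinAt
    have := h4.sub h5
    refine this.congr_deriv ?_
    rw [mul_one_div, div_self (hnz _ (hmem x hx.1))]
    ring
  have hcont : ContinuousOn f (Icc 0 t) := by
    intro x hx
    have h1 : ContinuousWithinAt (fun s => Φ s z) (Icc 0 t) x :=
      ((hsg.ode z hz x hx.1).continuousWithinAt).mono (fun y hy => hy.1)
    have h2 : ContinuousAt σ (Φ x z) := ((hσ.1) _ (hmem x hx.1)).continuousAt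
    have h6 : ContinuousWithinAt (fun s : ℝ => σ (Φ s z)) (Icc 0 t) x :=
      ContinuousAt.comp_continuousWithinAt (f := fun s : ℝ => Φ s z) (g := σ) h2 h1
    exact h6.sub Complex.continuous_ofReal.continuousWithinAt
  have hconst := constant_of_has_deriv_right_zero hcont hder t (right_mem_Icc.2 ht)
  simp only [hf, hsg.init z hz, Complex.ofReal_zero, sub_zero] at hconst
  linear_combination hconst

lemma segment_mem {a b : ℂ} (ha : a ∈ rightHalfPlane) (hb : b ∈ rightHalfPlane)
    {s : ℝ} (hs : s ∈ Icc (0:ℝ) 1) : a + s * (b - a) ∈ rightHalfPlane := by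
  have h1 : (0:ℝ) < a.re := ha
  have h2 : (0:ℝ) < b.re := hb
  show (0:ℝ) < (a + s * (b - a)).re
  have : (a + (s:ℂ) * (b - a)).re = a.re + s * (b.re - a.re) := by
    simp [Complex.add_re, Complex.mul_re, Complex.ofReal_re, Complex.ofReal_im, Complex.sub_re,
      Complex.sub_im]
  rw [this]
  rcases lt_or_eq_of_le hs.1 with h | h
  · nlinarith [mul_pos h h2, mul_nonneg (sub_nonneg.2 hs.2) h1.le]
  · rw [← h]; simpa using h1

lemma path_hasDerivAt (a D : ℂ) (s : ℝ) :
    HasDerivAt (fun u : ℝ => a + u * D) D s := by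
  have h1 : HasDerivAt (fun u : ℝ => (u : ℂ)) 1 s := by
    exact Complex.ofRealCLM.hasDerivAt (x := s)
  simpa using (h1.mul_const D).const_add a

lemma segment_integral {φ σ : ℂ → ℂ}
    (hφd : DifferentiableOn ℂ φ rightHalfPlane)
    (hnz : ∀ w ∈ rightHalfPlane, φ w ≠ 0)
    (hσ : IsSigmaFunction φ σ) {a b : ℂ}
    (ha : a ∈ rightHalfPlane) (hb : b ∈ rightHalfPlane) :
    σ b - σ a = (b - a) * ∫ s in (0:ℝ)..1, (φ (a + s * (b - a)))⁻¹ := by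
  have hmem : ∀ s : ℝ, s ∈ Icc (0:ℝ) 1 → a + s * (b - a) ∈ rightHalfPlane :=
    fun s hs => segment_mem ha hb hs
  have hpathc : Continuous (fun s : ℝ => a + (s : ℂ) * (b - a)) := by
    continuity
  have hcont : ContinuousOn (fun s : ℝ => (φ (a + s * (b - a)))⁻¹) (uIcc (0:ℝ) 1) := by
    rw [uIcc_of_le (by norm_num : (0:ℝ) ≤ 1)]
    refine ContinuousOn.inv₀ ?_ (fun s hs => hnz _ (hmem s hs))
    exact hφd.continuousOn.comp hpathc.continuousOn (fun s hs => hmem s hs)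
  have hderiv : ∀ s ∈ uIcc (0:ℝ) 1,
      HasDerivAt (fun u : ℝ => σ (a + u * (b - a))) ((φ (a + s * (b - a)))⁻¹ * (b - a)) s := by
    intro s hs
    rw [uIcc_of_le (by norm_num : (0:ℝ) ≤ 1)] at hs
    have h1 := (path_hasDerivAt a (b - a) s).hasDerivWithinAt (s := Set.univ)
    have h4 := sigma_comp_deriv hσ.1 h1 (hmem s hs)
    rw [hasDerivWithinAt_univ] at h4
    refine h4.congr_deriv ?_
    rw [mul_one_div]
    ring
  have hint : IntervalIntegrable (fun s : ℝ => (φ (a + s * (b - a)))⁻¹ * (b - a))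
      MeasureTheory.volume 0 1 := (hcont.mul continuousOn_const).intervalIntegrable
  have := intervalIntegral.integral_eq_sub_of_hasDerivAt hderiv hint
  rw [intervalIntegral.integral_mul_const] at this
  simp only [Complex.ofReal_one, Complex.ofReal_zero, one_mul, zero_mul, add_zero] at this
  rw [show a + (b - a) = b by ring] at this
  rw [← this]; ring

end Work

namespace Work2
open Work SPMain SPHalf

lemma isOpen_rhp : IsOpen rightHalfPlane := isOpen_lt continuous_const Complex.continuous_re

lemma one_mem_rhp : (1:ℂ) ∈ rightHalfPlane := by
  show (0:ℝ) < (1:ℂ).re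
  simp

lemma convex_rhp : Convex ℝ rightHalfPlane := convex_halfSpace_re_gt 0

lemma neBot_atInfty : (atInftyWithin rightHalfPlane).NeBot := by
  have h : Tendsto (fun x : ℝ => (x : ℂ) + 1) atTop (atInftyWithin rightHalfPlane) := by
    rw [atInftyWithin]
    refine Filter.tendsto_inf.2 ⟨?_, ?_⟩
    · rw [Filter.tendsto_comap_iff]
      apply Tendsto.congr' _ (tendsto_atTop_add_const_right atTop 1 tendsto_id)
      filter_upwards [eventually_ge_atTop (0:ℝ)] with x hx
      show x + 1 = ((fun w : ℂ => ‖w‖) ∘ fun x : ℝ => (x:ℂ)+1) x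
      have h2 : ((x:ℂ)+1) = ((x+1 : ℝ) : ℂ) := by push_cast; ring
      simp only [Function.comp_apply, h2, Complex.norm_real, Real.norm_eq_abs]
      rw [_root_.abs_of_nonneg (by linarith)]
    · rw [tendsto_principal]
      filter_upwards [eventually_ge_atTop (0:ℝ)] with x hx
      show (0:ℝ) < ((x:ℂ)+1).re
      simp only [Complex.add_re, Complex.ofReal_re, Complex.one_re]
      linarith
  exact Filter.neBot_of_le h

lemma hrep_unif {φ : ℂ → ℂ} {β : ℂ}
    (hrep : Tendsto (fun w : ℂ => φ w - β) (atInftyWithin rightHalfPlane) (𝓝 0)) :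
    ∀ ε > 0, ∃ R : ℝ, ∀ z ∈ rightHalfPlane, R ≤ ‖z‖ → ‖φ z - β‖ < ε := by
  intro ε hε
  have h1 : {z : ℂ | ‖φ z - β‖ < ε} ∈ atInftyWithin rightHalfPlane := by
    refine Filter.mem_of_superset (hrep (Metric.ball_mem_nhds 0 hε)) ?_
    intro z hz
    simpa [Metric.mem_ball, Complex.dist_eq] using hz
  rw [atInftyWithin, Filter.mem_inf_principal, Filter.mem_comap] at h1
  obtain ⟨U, hU, hsub⟩ := h1
  rw [Filter.mem_atTop_sets] at hU
  obtain ⟨R, hR⟩ := hU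
  exact ⟨R, fun z hz hRz => (hsub (hR _ hRz)) hz⟩

lemma abs_le_of_normSq_le {x y : ℂ} {k : ℝ} (hk0 : 0 ≤ k)
    (h : Complex.normSq x ≤ k^2 * Complex.normSq y) : ‖x‖ ≤ k * ‖y‖ := by
  calc ‖x‖ = Real.sqrt (Complex.normSq x) := Complex.norm_def x
    _ ≤ Real.sqrt (k^2 * Complex.normSq y) := Real.sqrt_le_sqrt h
    _ = k * ‖y‖ := by
        rw [Real.sqrt_mul (sq_nonneg k), Real.sqrt_sq hk0, Complex.norm_def]

lemma normSq_le_of_abs_le {x y : ℂ} {k : ℝ} (h : ‖x‖ ≤ k * ‖y‖) :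
    Complex.normSq x ≤ k^2 * Complex.normSq y := by
  have h2 := mul_self_le_mul_self (norm_nonneg x) h
  calc Complex.normSq x = ‖x‖ * ‖x‖ := by rw [← Complex.sq_norm]; ring
    _ ≤ (k * ‖y‖) * (k * ‖y‖) := h2
    _ = k^2 * Complex.normSq y := by rw [mul_mul_mul_comm, ← Complex.sq_norm]; ring

lemma quad_ineq {A dr di k s : ℝ} (hk0 : 0 ≤ k) (hk1 : k ≤ 1)
    (hs0 : 0 ≤ s) (hs1 : s ≤ 1)
    (h : dr^2 + di^2 ≤ k^2 * ((2*A+dr)^2 + di^2)) :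
    s^2 * (dr^2 + di^2) ≤ k^2 * ((2*A+s*dr)^2 + s^2 * di^2) := by
  have hQ1 : 0 ≤ k^2 * ((2*A+dr)^2 + di^2) - (dr^2+di^2) := by linarith
  have hQ0 : (0:ℝ) ≤ k^2 * (4*A^2) := by positivity
  have hX : (0:ℝ) ≤ dr^2 + di^2 := by positivity
  have hk2 : k^2 ≤ 1 := by nlinarith
  nlinarith [mul_nonneg hs0 hQ1, mul_nonneg (sub_nonneg.2 hs1) hQ0,
    mul_nonneg (mul_nonneg hs0 (sub_nonneg.2 hs1)) (mul_nonneg (sub_nonneg.2 hk2) hX)]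

lemma apollonius {a b : ℂ} {k : ℝ} (hk0 : 0 ≤ k) (hk1 : k ≤ 1) (ha : 0 < a.re)
    (h : ‖b - a‖ ≤ k * ‖b + (starRingEnd ℂ) a‖)
    {s : ℝ} (hs0 : 0 ≤ s) (hs1 : s ≤ 1) :
    ‖(a + s * (b - a)) - a‖
      ≤ k * ‖(a + s * (b - a)) + (starRingEnd ℂ) a‖ := by
  apply abs_le_of_normSq_le hk0
  have hsq := normSq_le_of_abs_le h
  set dr := (b - a).re with hdr
  set di := (b - a).im with hdi
  have e5 : Complex.normSq (b - a) = dr^2 + di^2 := by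
    rw [Complex.normSq_apply]; ring
  have e4 : Complex.normSq (b + (starRingEnd ℂ) a) = (2*a.re + dr)^2 + di^2 := by
    rw [Complex.normSq_apply]
    simp only [Complex.add_re, Complex.add_im, Complex.conj_re, Complex.conj_im, hdr, hdi,
      Complex.sub_re, Complex.sub_im]
    ring
  have e3 : Complex.normSq ((a + s * (b - a)) - a) = s^2 * (dr^2 + di^2) := by
    have : (a + (s:ℂ) * (b - a)) - a = (s:ℂ) * (b - a) := by ring
    rw [this, Complex.normSq_apply]
    simp only [Complex.mul_re, Complex.mul_im, Complex.ofReal_re, Complex.ofReal_im, hdr, hdi]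
    ring
  have e2 : Complex.normSq ((a + s * (b - a)) + (starRingEnd ℂ) a)
      = (2*a.re + s*dr)^2 + s^2 * di^2 := by
    rw [Complex.normSq_apply]
    simp only [Complex.add_re, Complex.add_im, Complex.conj_re, Complex.conj_im,
      Complex.mul_re, Complex.mul_im, Complex.ofReal_re, Complex.ofReal_im, hdr, hdi,
      Complex.sub_re, Complex.sub_im]
    ring
  rw [e3, e2]
  rw [e5, e4] at hsq
  exact quad_ineq hk0 hk1 hs0 hs1 hsq

lemma harnack_alg {Ic pa : ℂ} {c C : ℝ} (hc : 0 < c) (hC : 0 ≤ C) (hpa : 0 < pa.re)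
    (h1 : c * pa.re ≤ Ic.re) (h2 : ‖Ic - pa‖ ≤ C * pa.re) :
    ‖pa‖ ≤ ((1 + C) / c + 1) * ‖Ic‖ := by
  have hIc : c * pa.re ≤ ‖Ic‖ := h1.trans (Complex.re_le_norm Ic)
  have e1 : pa.re ≤ ‖Ic‖ / c := by rwa [le_div_iff₀ hc, mul_comm]
  have e2 : |pa.im| ≤ ‖Ic‖ + C * pa.re := by
    have : pa.im = Ic.im - (Ic - pa).im := by simp
    rw [this]
    refine (abs_sub _ _).trans ?_
    gcongr
    · exact (Complex.abs_im_le_norm Ic)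
    · exact (Complex.abs_im_le_norm _).trans h2
  have e3 := Complex.norm_le_abs_re_add_abs_im pa
  have e4 : |pa.re| = pa.re := abs_of_pos hpa
  have hIcnn : 0 ≤ ‖Ic‖ := norm_nonneg _
  calc ‖pa‖ ≤ |pa.re| + |pa.im| := e3
    _ ≤ pa.re + (‖Ic‖ + C * pa.re) := by rw [e4]; linarith
    _ = (1 + C) * pa.re + ‖Ic‖ := by ring
    _ ≤ (1 + C) * (‖Ic‖ / c) + ‖Ic‖ := by
        have : (0:ℝ) ≤ 1 + C := by linarith
        nlinarith
    _ = ((1 + C) / c + 1) * ‖Ic‖ := by ring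

end Work2

theorem stmt13 (Φ : ℝ → ℂ → ℂ) (φ σ : ℂ → ℂ) (β : ℂ)
    (hsg : IsContinuousSemigroupOnHalfPlane Φ φ)
    (hdw : HasDWPointInfty Φ)
    (hnz : ∀ w ∈ rightHalfPlane, φ w ≠ 0)
    (hrep : Tendsto (fun w : ℂ => φ w - β) (atInftyWithin rightHalfPlane) (𝓝 0))
    (hσ : IsSigmaFunction φ σ) :
    ∀ w ∈ rightHalfPlane,
      Tendsto (fun t : ℝ => Φ t w - Φ t 1) atTop (𝓝 (β * σ w)) := by
  intro w hw
  have h1m : (1:ℂ) ∈ rightHalfPlane := Work2.one_mem_rhp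
  set a : ℝ → ℂ := fun t => Φ t 1 with ha
  set b : ℝ → ℂ := fun t => Φ t w with hb
  have hamem : ∀ t : ℝ, 0 ≤ t → a t ∈ rightHalfPlane := fun t ht => hsg.mapsTo t ht h1m
  have hbmem : ∀ t : ℝ, 0 ≤ t → b t ∈ rightHalfPlane := fun t ht => hsg.mapsTo t ht hw
  set k : ℝ := ‖w - 1‖ / ‖w + 1‖ with hkdef
  have hw1pos : 0 < ‖w + 1‖ := norm_pos_iff.mpr (SPHalf.add_one_ne hw)
  have hk0 : 0 ≤ k := by rw [hkdef]; positivity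
  have hk1 : k < 1 := by
    rw [hkdef, div_lt_one hw1pos]
    have h := SPHalf.cayley_mem hw
    simp only [Metric.mem_ball, dist_zero_right, SPHalf.cayley,
      norm_div] at h
    rwa [div_lt_one hw1pos] at h
  have key1 : ∀ t : ℝ, 0 ≤ t →
      ‖b t - a t‖ ≤ k * ‖b t + (starRingEnd ℂ) (a t)‖ := by
    intro t ht
    have sp := SPMain.sp_halfplane (hsg.holomorphic t ht) (hsg.mapsTo t ht) hw h1m
    rw [map_one] at sp
    rw [hkdef, div_mul_eq_mul_div, le_div_iff₀ hw1pos]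
    exact sp.trans_eq (mul_comm _ _)
  have hseg : ∀ t : ℝ, 0 ≤ t → ∀ s : ℝ, s ∈ Icc (0:ℝ) 1 →
      a t + s * (b t - a t) ∈ rightHalfPlane :=
    fun t ht s hs => Work.segment_mem (hamem t ht) (hbmem t ht) hs
  have F1 : ∀ t : ℝ, 0 ≤ t →
      (b t - a t) * (∫ s in (0:ℝ)..1, (φ (a t + s * (b t - a t)))⁻¹) = σ w := by
    intro t ht
    have h2 := Work.segment_integral hsg.gen_holomorphic hnz hσ (hamem t ht) (hbmem t ht)
    have h3 := Work.sigma_orbit hsg hnz hσ hw ht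
    have h4 := Work.sigma_orbit hsg hnz hσ h1m ht
    rw [hσ.2, zero_add] at h4
    rw [← h2, h3, h4]
    ring
  have hmod : ∀ t : ℝ, 0 ≤ t → ∀ s : ℝ, s ∈ Icc (0:ℝ) 1 →
      (1 - k)/2 * ‖a t‖ ≤ ‖a t + s * (b t - a t)‖ := by
    intro t ht s hs
    have hD := key1 t ht
    have hDb : ‖b t + (starRingEnd ℂ) (a t)‖ ≤ ‖b t‖ + ‖a t‖ := by
      refine (norm_add_le _ _).trans ?_
      rw [Complex.norm_conj]
    have hD2 : ‖b t - a t‖ ≤ k * (‖b t‖ + ‖a t‖) :=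
      hD.trans (mul_le_mul_of_nonneg_left hDb hk0)
    have habsD : ‖(s:ℂ) * (b t - a t)‖ = s * ‖b t - a t‖ := by
      rw [norm_mul, Complex.norm_real, Real.norm_eq_abs, _root_.abs_of_nonneg hs.1]
    have h1 : ‖a t‖ ≤ ‖a t + s * (b t - a t)‖ + s * ‖b t - a t‖ := by
      have e : a t = (a t + s * (b t - a t)) + (-(s * (b t - a t))) := by ring
      calc ‖a t‖ = ‖(a t + s * (b t - a t)) + (-((s:ℂ) * (b t - a t)))‖ := by rw [← e]
        _ ≤ ‖a t + s * (b t - a t)‖ + ‖-((s:ℂ) * (b t - a t))‖ := norm_add_le _ _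
        _ = ‖a t + s * (b t - a t)‖ + s * ‖b t - a t‖ := by
            rw [norm_neg, habsD]
    have h2 : ‖b t‖ ≤ ‖a t + s * (b t - a t)‖ + (1 - s) * ‖b t - a t‖ := by
      have e : b t = (a t + s * (b t - a t)) + ((1:ℂ) - s) * (b t - a t) := by ring
      calc ‖b t‖ = ‖(a t + s * (b t - a t)) + ((1:ℂ) - (s:ℂ)) * (b t - a t)‖ := by rw [← e]
        _ ≤ ‖a t + s * (b t - a t)‖ + ‖((1:ℂ) - (s:ℂ)) * (b t - a t)‖ := norm_add_le _ _
        _ = ‖a t + s * (b t - a t)‖ + (1 - s) * ‖b t - a t‖ := by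
            rw [norm_mul]
            have : ((1:ℂ) - (s:ℂ)) = ((1 - s : ℝ) : ℂ) := by push_cast; ring
            rw [this, Complex.norm_real, Real.norm_eq_abs, _root_.abs_of_nonneg (by linarith [hs.2])]
    have hbnn := norm_nonneg (b t)
    have hann := norm_nonneg (a t)
    have hsD := norm_nonneg (b t - a t)
    nlinarith [mul_nonneg (by linarith : (0:ℝ) ≤ 1 - k) hbnn,
      mul_nonneg (by linarith : (0:ℝ) ≤ 1 - k) hann]
  have hAbsA : Tendsto (fun t => ‖a t‖) atTop atTop := hdw 1 h1m
  have hsegR : ∀ R : ℝ, ∀ᶠ t in atTop, ∀ s ∈ Icc (0:ℝ) 1,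
      R ≤ ‖a t + s * (b t - a t)‖ := by
    intro R
    have h3 : Tendsto (fun t => (1-k)/2 * ‖a t‖) atTop atTop :=
      hAbsA.const_mul_atTop (by linarith)
    filter_upwards [h3.eventually_ge_atTop R, eventually_ge_atTop (0:ℝ)] with t h2t ht s hs
    exact h2t.trans (hmod t ht s hs)
  have hunif : ∀ ε : ℝ, 0 < ε → ∀ᶠ t in atTop, ∀ s ∈ Icc (0:ℝ) 1,
      ‖φ (a t + s * (b t - a t)) - β‖ < ε := by
    intro ε hε
    obtain ⟨R, hR⟩ := Work2.hrep_unif hrep ε hε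
    filter_upwards [hsegR R, eventually_ge_atTop (0:ℝ)] with t hRt ht s hs
    exact hR _ (hseg t ht s hs) (hRt s hs)
  have hcontp : ∀ t : ℝ, 0 ≤ t →
      ContinuousOn (fun s : ℝ => (φ (a t + s * (b t - a t)))⁻¹) (uIcc (0:ℝ) 1) := by
    intro t ht
    rw [uIcc_of_le (by norm_num : (0:ℝ) ≤ 1)]
    refine ContinuousOn.inv₀ ?_ (fun s hs => hnz _ (hseg t ht s hs))
    refine hsg.gen_holomorphic.continuousOn.comp ?_ (fun s hs => hseg t ht s hs)
    exact (continuous_const.add (Complex.continuous_ofReal.mul continuous_const)).continuousOn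
  have main : (∀ᶠ t in atTop, (∫ s in (0:ℝ)..1, (φ (a t + s * (b t - a t)))⁻¹) ≠ 0) ∧
      Tendsto (fun t => (∫ s in (0:ℝ)..1, (φ (a t + s * (b t - a t)))⁻¹)⁻¹) atTop (𝓝 β) := by
    by_cases hβ : β = 0
    · subst hβ
      have hrepos : ∀ z ∈ rightHalfPlane, 0 < (φ z).re := by
        by_contra hcon
        push_neg at hcon
        obtain ⟨z₀, hz₀, hre⟩ := hcon
        have hre0 : (φ z₀).re = 0 := le_antisymm hre (hsg.gen_re_nonneg z₀ hz₀)
        have hana : AnalyticOnNhd ℂ φ rightHalfPlane :=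
          hsg.gen_holomorphic.analyticOnNhd Work2.isOpen_rhp
        rcases hana.is_constant_or_isOpen Work2.convex_rhp.isPreconnected with ⟨v, hv⟩ | hopen
        · have hevc : (fun z : ℂ => φ z - 0) =ᶠ[atInftyWithin rightHalfPlane]
              (fun _ : ℂ => v - 0) := by
            have hmem : rightHalfPlane ∈ atInftyWithin rightHalfPlane :=
              Filter.mem_inf_of_right (Filter.mem_principal_self _)
            filter_upwards [hmem] with z hz
            rw [hv z hz]
          haveI := Work2.neBot_atInfty
          have hveq : Tendsto (fun _ : ℂ => v - 0) (atInftyWithin rightHalfPlane) (𝓝 0) :=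
            Filter.Tendsto.congr' hevc hrep
          have hv0 : v - 0 = (0:ℂ) := tendsto_nhds_unique tendsto_const_nhds hveq
          apply hnz z₀ hz₀
          rw [hv z₀ hz₀]
          simpa using hv0
        · have hO : IsOpen (φ '' rightHalfPlane) :=
            hopen _ (subset_refl _) Work2.isOpen_rhp
          rw [Metric.isOpen_iff] at hO
          obtain ⟨δ, hδ0, hball⟩ := hO _ ⟨z₀, hz₀, rfl⟩
          have hmem2 : φ z₀ - ((δ/2 : ℝ) : ℂ) ∈ Metric.ball (φ z₀) δ := by
            rw [Metric.mem_ball, Complex.dist_eq]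
            have e : φ z₀ - ((δ/2 : ℝ) : ℂ) - φ z₀ = -(((δ/2 : ℝ)) : ℂ) := by ring
            rw [e, norm_neg, Complex.norm_real, Real.norm_eq_abs, _root_.abs_of_pos (by linarith)]
            linarith
          obtain ⟨z₁, hz₁, he⟩ := hball hmem2
          have hge := hsg.gen_re_nonneg z₁ hz₁
          rw [he] at hge
          simp only [Complex.sub_re, Complex.ofReal_re, hre0] at hge
          linarith
      have hpd : DifferentiableOn ℂ (fun z => (φ z)⁻¹) rightHalfPlane :=
        hsg.gen_holomorphic.inv (fun z hz => hnz z hz)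
      have hpm : MapsTo (fun z => (φ z)⁻¹) rightHalfPlane rightHalfPlane := by
        intro z hz
        show (0:ℝ) < ((φ z)⁻¹).re
        rw [Complex.inv_re]
        exact div_pos (hrepos z hz) (Complex.normSq_pos.2 (hnz z hz))
      have hc0 : 0 < (1-k)/(1+k) := by apply div_pos <;> linarith
      have hC0 : 0 ≤ 2*k/(1-k) := by apply div_nonneg <;> linarith
      have hHar : ∀ t : ℝ, 0 ≤ t → ∀ s ∈ Icc (0:ℝ) 1,
          ‖(φ (a t + s * (b t - a t)))⁻¹ - (φ (a t))⁻¹‖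
            ≤ 2*k/(1-k) * (((φ (a t))⁻¹).re)
          ∧ (1-k)/(1+k) * (((φ (a t))⁻¹).re) ≤ ((φ (a t + s * (b t - a t)))⁻¹).re := by
        intro t ht s hs
        have hzm := hseg t ht s hs
        have ham := hamem t ht
        have sp := SPMain.sp_halfplane hpd hpm hzm ham
        have hap := Work2.apollonius hk0 hk1.le (show (0:ℝ) < (a t).re from ham)
          (key1 t ht) hs.1 hs.2
        have hpos := SPMain.abs_add_conj_pos hzm ham
        have h5 : ‖(φ (a t + s * (b t - a t)))⁻¹ - (φ (a t))⁻¹‖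
            ≤ k * ‖(φ (a t + s * (b t - a t)))⁻¹
              + (starRingEnd ℂ) ((φ (a t))⁻¹)‖ := by
          have h6 := sp.trans (mul_le_mul_of_nonneg_left hap (norm_nonneg _))
          refine le_of_mul_le_mul_right ?_ hpos
          nlinarith [h6]
        have hrepa : (0:ℝ) < (((φ (a t))⁻¹)).re := hpm ham
        exact SPMain.harnack hrepa hk0 hk1 h5
      have haT : Tendsto a atTop (atInftyWithin rightHalfPlane) := by
        rw [atInftyWithin]
        refine Filter.tendsto_inf.2 ⟨?_, ?_⟩
        · rw [Filter.tendsto_comap_iff]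
          exact hAbsA
        · rw [tendsto_principal]
          filter_upwards [eventually_ge_atTop (0:ℝ)] with t ht
          exact hamem t ht
      have hφa : Tendsto (fun t => φ (a t) - 0) atTop (𝓝 0) := hrep.comp haT
      have habs0 : Tendsto (fun t => ‖φ (a t)‖) atTop (𝓝[>] 0) := by
        rw [tendsto_nhdsWithin_iff]
        constructor
        · have h7 := (continuous_norm.tendsto 0).comp hφa
          simp only [sub_zero, norm_zero] at h7
          exact h7
        · filter_upwards [eventually_ge_atTop (0:ℝ)] with t ht
          exact mem_Ioi.2 (norm_pos_iff.mpr (hnz _ (hamem t ht)))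
      have hpaT : Tendsto (fun t => ‖(φ (a t))⁻¹‖) atTop atTop := by
        have h8 := tendsto_inv_nhdsGT_zero.comp habs0
        refine h8.congr ?_
        intro t
        simp [norm_inv]
      have hfact : ∀ᶠ t in atTop, ‖(φ (a t))⁻¹‖
          ≤ ((1 + 2*k/(1-k)) / ((1-k)/(1+k)) + 1)
            * ‖∫ s in (0:ℝ)..1, (φ (a t + s * (b t - a t)))⁻¹‖ := by
        filter_upwards [eventually_ge_atTop (0:ℝ)] with t ht
        have hIint : IntervalIntegrable (fun s : ℝ => (φ (a t + s * (b t - a t)))⁻¹)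
            MeasureTheory.volume 0 1 := (hcontp t ht).intervalIntegrable
        have hReI : (1-k)/(1+k) * (((φ (a t))⁻¹).re)
            ≤ (∫ s in (0:ℝ)..1, (φ (a t + s * (b t - a t)))⁻¹).re := by
          have hri := Complex.reCLM.intervalIntegral_comp_comm hIint
          have hreint : IntervalIntegrable (fun s : ℝ => ((φ (a t + s * (b t - a t)))⁻¹).re)
              MeasureTheory.volume 0 1 := by
            apply ContinuousOn.intervalIntegrable
            exact Complex.continuous_re.comp_continuousOn (hcontp t ht)
          have hle := intervalIntegral.integral_mono_on (by norm_num : (0:ℝ) ≤ 1)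
            intervalIntegrable_const hreint (fun s hs => (hHar t ht s hs).2)
          simp only [intervalIntegral.integral_const, smul_eq_mul, sub_zero, one_mul] at hle
          calc (1-k)/(1+k) * (((φ (a t))⁻¹).re)
              ≤ ∫ s in (0:ℝ)..1, ((φ (a t + s * (b t - a t)))⁻¹).re := hle
            _ = (∫ s in (0:ℝ)..1, (φ (a t + s * (b t - a t)))⁻¹).re := by simpa using hri
        have hImI : ‖(∫ s in (0:ℝ)..1, (φ (a t + s * (b t - a t)))⁻¹) - (φ (a t))⁻¹‖
            ≤ 2*k/(1-k) * (((φ (a t))⁻¹).re) := by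
          have e1 : (∫ s in (0:ℝ)..1, (φ (a t + s * (b t - a t)))⁻¹) - (φ (a t))⁻¹
              = ∫ s in (0:ℝ)..1, ((φ (a t + s * (b t - a t)))⁻¹ - (φ (a t))⁻¹) := by
            rw [intervalIntegral.integral_sub hIint intervalIntegrable_const,
              intervalIntegral.integral_const]
            simp
          rw [e1]
          have hb2 := intervalIntegral.norm_integral_le_of_norm_le_const
            (a := (0:ℝ)) (b := (1:ℝ)) (C := 2*k/(1-k) * (((φ (a t))⁻¹).re))
            (f := fun s : ℝ => (φ (a t + s * (b t - a t)))⁻¹ - (φ (a t))⁻¹) ?_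
          · simpa using hb2
          · intro s hs'
            have hs : s ∈ Icc (0:ℝ) 1 := by
              rw [Set.uIoc_of_le (by norm_num : (0:ℝ) ≤ 1)] at hs'
              exact ⟨hs'.1.le, hs'.2⟩
            exact (hHar t ht s hs).1
        exact Work2.harnack_alg hc0 hC0 (hpm (hamem t ht)) hReI hImI
      have hM0 : 0 < ((1 + 2*k/(1-k)) / ((1-k)/(1+k)) + 1) := by
        have h9 : 0 ≤ (1 + 2*k/(1-k)) / ((1-k)/(1+k)) := div_nonneg (by linarith) hc0.le
        linarith
      have hIabs : Tendsto
          (fun t => ‖∫ s in (0:ℝ)..1, (φ (a t + s * (b t - a t)))⁻¹‖) atTop atTop := by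
        refine tendsto_atTop_mono' atTop ?_ (hpaT.const_mul_atTop (inv_pos.2 hM0))
        filter_upwards [hfact] with t hft
        rw [inv_mul_le_iff₀ hM0]
        exact hft
      constructor
      · filter_upwards [hIabs.eventually_ge_atTop 1] with t h1t
        intro h0
        rw [h0, norm_zero] at h1t
        linarith
      · rw [tendsto_zero_iff_norm_tendsto_zero]
        have h10 := tendsto_inv_atTop_zero.comp hIabs
        refine h10.congr ?_
        intro t
        simp [norm_inv]
    · have hβa : 0 < ‖β‖ := norm_pos_iff.mpr hβ
      have hI : Tendsto (fun t => ∫ s in (0:ℝ)..1, (φ (a t + s * (b t - a t)))⁻¹)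
          atTop (𝓝 β⁻¹) := by
        rw [Metric.tendsto_nhds]
        intro ε hε
        have hδ0 : 0 < min (‖β‖ / 2) (ε * (‖β‖)^2 / 8) := by
          apply lt_min
          · positivity
          · positivity
        filter_upwards [hunif _ hδ0, eventually_ge_atTop (0:ℝ)] with t hut ht
        have hIint : IntervalIntegrable (fun s : ℝ => (φ (a t + s * (b t - a t)))⁻¹)
            MeasureTheory.volume 0 1 := (hcontp t ht).intervalIntegrable
        have e1 : (∫ s in (0:ℝ)..1, (φ (a t + s * (b t - a t)))⁻¹) - β⁻¹
            = ∫ s in (0:ℝ)..1, ((φ (a t + s * (b t - a t)))⁻¹ - β⁻¹) := by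
          rw [intervalIntegral.integral_sub hIint intervalIntegrable_const,
            intervalIntegral.integral_const]
          simp
        have e2 : ∀ s ∈ Set.uIoc (0:ℝ) 1, ‖(φ (a t + s * (b t - a t)))⁻¹ - β⁻¹‖ ≤ ε/2 := by
          intro s hs'
          have hs : s ∈ Icc (0:ℝ) 1 := by
            rw [Set.uIoc_of_le (by norm_num : (0:ℝ) ≤ 1)] at hs'
            exact ⟨hs'.1.le, hs'.2⟩
          have h1 := hut s hs
          have hφz : φ (a t + s * (b t - a t)) ≠ 0 := hnz _ (hseg t ht s hs)
          have hδ1 : ‖φ (a t + s * (b t - a t)) - β‖ < ‖β‖ / 2 :=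
            lt_of_lt_of_le h1 (min_le_left _ _)
          have hδ2 : ‖φ (a t + s * (b t - a t)) - β‖ < ε * (‖β‖)^2 / 8 :=
            lt_of_lt_of_le h1 (min_le_right _ _)
          have h2 : ‖β‖ / 2 ≤ ‖φ (a t + s * (b t - a t))‖ := by
            have h3 := norm_add_le (φ (a t + s * (b t - a t)))
              (β - φ (a t + s * (b t - a t)))
            have e : φ (a t + s * (b t - a t)) + (β - φ (a t + s * (b t - a t))) = β := by ring
            rw [e] at h3
            have e4 : ‖β - φ (a t + s * (b t - a t))‖
                = ‖φ (a t + s * (b t - a t)) - β‖ := norm_sub_rev _ _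
            rw [e4] at h3
            linarith
          have hq : (φ (a t + s * (b t - a t)))⁻¹ - β⁻¹
              = (β - φ (a t + s * (b t - a t))) * ((φ (a t + s * (b t - a t)))⁻¹ * β⁻¹) := by
            field_simp
          rw [hq, norm_mul, norm_mul, norm_inv, norm_inv]
          have hzpos : 0 < ‖φ (a t + s * (b t - a t))‖ := norm_pos_iff.mpr hφz
          have habs1 : ‖β - φ (a t + s * (b t - a t))‖ ≤ ε * (‖β‖)^2 / 8 := by
            rw [norm_sub_rev]
            exact hδ2.le
          have hX : (‖φ (a t + s * (b t - a t))‖)⁻¹ ≤ 2 / ‖β‖ := by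
            have := inv_anti₀ (by positivity : (0:ℝ) < ‖β‖ / 2) h2
            rwa [inv_div] at this
          calc ‖β - φ (a t + s * (b t - a t))‖
              * ((‖φ (a t + s * (b t - a t))‖)⁻¹ * (‖β‖)⁻¹)
              ≤ (ε * (‖β‖)^2 / 8) * ((2 / ‖β‖) * (‖β‖)⁻¹) := by
                have hnn1 : (0:ℝ) ≤ (‖φ (a t + s * (b t - a t))‖)⁻¹ := by positivity
                have hnn2 : (0:ℝ) ≤ (‖β‖)⁻¹ := by positivity
                apply mul_le_mul habs1 _ (by positivity) (by positivity)
                exact mul_le_mul_of_nonneg_right hX hnn2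
            _ = ε / 4 := by field_simp; ring
            _ ≤ ε / 2 := by linarith
        rw [dist_eq_norm, e1]
        calc ‖∫ s in (0:ℝ)..1, ((φ (a t + s * (b t - a t)))⁻¹ - β⁻¹)‖
            ≤ ε/2 * |1 - 0| := intervalIntegral.norm_integral_le_of_norm_le_const e2
          _ < ε := by rw [show |(1:ℝ) - 0| = 1 by norm_num]; linarith
      constructor
      · exact hI.eventually_ne (inv_ne_zero hβ)
      · have h9 := hI.inv₀ (inv_ne_zero hβ)
        rwa [inv_inv] at h9
  obtain ⟨hne, hinv⟩ := main
  have heq : ∀ᶠ t in atTop, Φ t w - Φ t 1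
      = σ w * (∫ s in (0:ℝ)..1, (φ (a t + s * (b t - a t)))⁻¹)⁻¹ := by
    filter_upwards [hne, eventually_ge_atTop (0:ℝ)] with t h0 ht
    have hF := F1 t ht
    show b t - a t = _
    rw [← hF, mul_assoc, mul_inv_cancel₀ h0, mul_one]
  have hlim : Tendsto (fun t => σ w * (∫ s in (0:ℝ)..1, (φ (a t + s * (b t - a t)))⁻¹)⁻¹)
      atTop (𝓝 (σ w * β)) := tendsto_const_nhds.mul hinv
  rw [show β * σ w = σ w * β from mul_comm _ _]
  exact Filter.Tendsto.congr' (EventuallyEq.symm heq) hlim
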